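/- arXiv:1104.2844 — 4 statements merged into one kernel-verified Lean document; each statement's English description precedes it below -/
import Mathlib

section
/- Any concept C built only from concept names, conjunction, existential restriction, universal restriction, and implications A → D with A a concept name, is preserved under binary products: if d₁ ∈ C^{I₁} and d₂ ∈ C^{I₂}, then (d₁,d₂) ∈ C^{I₁ × I₂}. -/
structure Interp (A R : Type) where
  Dom : Type
  atom : A → Dom → Prop
  rel : R → Dom → Dom → Prop

/-- Concepts built from concept names, conjunction, existential restriction,
universal restriction, and implications `A → D` with `A` a concept name. -/
inductive PC (A R : Type) where
  | atom : A → PC A R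
  | conj : PC A R → PC A R → PC A R
  | ex : R → PC A R → PC A R
  | all : R → PC A R → PC A R
  | imp : A → PC A R → PC A R

def PC.sat {A R : Type} (I : Interp A R) : PC A R → I.Dom → Prop
  | PC.atom a, d => I.atom a d
  | PC.conj C D, d => PC.sat I C d ∧ PC.sat I D d
  | PC.ex r C, d => ∃ e, I.rel r d e ∧ PC.sat I C e
  | PC.all r C, d => ∀ e, I.rel r d e → PC.sat I C e
  | PC.imp a C, d => I.atom a d → PC.sat I C d

def Prod2 {A R : Type} (I₁ I₂ : Interp A R) : Interp A R where
  Dom := I₁.Dom × I₂.Dom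
  atom a d := I₁.atom a d.1 ∧ I₂.atom a d.2
  rel r d e := I₁.rel r d.1 e.1 ∧ I₂.rel r d.2 e.2

theorem PC_preserved_under_binary_products {A R : Type} (C : PC A R)
    (I₁ I₂ : Interp A R) (d₁ : I₁.Dom) (d₂ : I₂.Dom)
    (h₁ : PC.sat I₁ C d₁) (h₂ : PC.sat I₂ C d₂) :
    PC.sat (Prod2 I₁ I₂) C (d₁, d₂) := by
  induction C generalizing d₁ d₂ with
  | atom a => exact ⟨h₁, h₂⟩
  | conj C D ihC ihD => exact ⟨ihC _ _ h₁.1 h₂.1, ihD _ _ h₁.2 h₂.2⟩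
  | ex r C ih =>
    obtain ⟨e₁, hr₁, hs₁⟩ := h₁
    obtain ⟨e₂, hr₂, hs₂⟩ := h₂
    exact ⟨(e₁, e₂), ⟨hr₁, hr₂⟩, ih _ _ hs₁ hs₂⟩
  | all r C ih =>
    rintro ⟨e₁, e₂⟩ ⟨hr₁, hr₂⟩
    exact ih _ _ (h₁ _ hr₁) (h₂ _ hr₂)
  | imp a C ih =>
    rintro ⟨ha₁, ha₂⟩
    exact ih _ _ (h₁ ha₁) (h₂ ha₂)
end

section
/- An ALC concept C is preserved under binary products if and only if the concept ∃s.C is preserved under binary products (for a role s not occurring in C). -/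
inductive ALC (A R : Type) where
  | atom : A → ALC A R
  | neg : ALC A R → ALC A R
  | conj : ALC A R → ALC A R → ALC A R
  | ex : R → ALC A R → ALC A R

def ALC.sat {A R : Type} (I : Interp A R) : ALC A R → I.Dom → Prop
  | ALC.atom a, d => I.atom a d
  | ALC.neg C, d => ¬ ALC.sat I C d
  | ALC.conj C D, d => ALC.sat I C d ∧ ALC.sat I D d
  | ALC.ex r C, d => ∃ e, I.rel r d e ∧ ALC.sat I C e

/-- The set of role names occurring in a concept. -/
def ALC.roles {A R : Type} : ALC A R → Set R
  | ALC.atom _ => ∅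
  | ALC.neg C => C.roles
  | ALC.conj C D => C.roles ∪ D.roles
  | ALC.ex r C => insert r C.roles

/-- `C` is preserved under binary products. -/
def PreservedProd {A R : Type} (C : ALC A R) : Prop :=
  ∀ (I₁ I₂ : Interp A R) (d₁ : I₁.Dom) (d₂ : I₂.Dom),
    ALC.sat I₁ C d₁ → ALC.sat I₂ C d₂ → ALC.sat (Prod2 I₁ I₂) C (d₁, d₂)

lemma sat_rel_congr {A R : Type} (D : Type) (at1 : A → D → Prop)
    (r1 r2 : R → D → D → Prop) (C : ALC A R)
    (h : ∀ r ∈ C.roles, r1 r = r2 r) (d : D) :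
    ALC.sat ⟨D, at1, r1⟩ C d ↔ ALC.sat ⟨D, at1, r2⟩ C d := by
  induction C generalizing d with
  | atom a => rfl
  | neg C ih => exact not_congr (ih h d)
  | conj C D ihC ihD =>
      exact and_congr (ihC (fun r hr => h r (Or.inl hr)) d)
        (ihD (fun r hr => h r (Or.inr hr)) d)
  | ex r C ih =>
      simp only [ALC.sat]
      have hr : r1 r = r2 r := h r (Set.mem_insert _ _)
      exact exists_congr fun e => by
        rw [hr]
        exact and_congr Iff.rfl (ih (fun q hq => h q (Set.mem_insert_of_mem _ hq)) e)

def addRel {A R : Type} [DecidableEq R] (I : Interp A R) (s : R)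
    (p : I.Dom → I.Dom → Prop) : Interp A R :=
  ⟨I.Dom, I.atom, fun r => if r = s then p else I.rel r⟩

lemma sat_addRel {A R : Type} [DecidableEq R] (I : Interp A R) (s : R)
    (p : I.Dom → I.Dom → Prop) (C : ALC A R) (hs : s ∉ C.roles) (d : I.Dom) :
    ALC.sat (addRel I s p) C d ↔ ALC.sat I C d := by
  exact sat_rel_congr I.Dom I.atom _ I.rel C
    (fun r hr => by
      have : r ≠ s := fun h => hs (h ▸ hr)
      simp [this]) d

theorem preservedProd_iff_ex {A R : Type} (C : ALC A R) (s : R)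
    (hs : s ∉ C.roles) :
    PreservedProd C ↔ PreservedProd (ALC.ex s C) := by
  classical
  constructor
  · intro hC I₁ I₂ d₁ d₂ h₁ h₂
    obtain ⟨e₁, hr₁, hc₁⟩ := h₁
    obtain ⟨e₂, hr₂, hc₂⟩ := h₂
    exact ⟨(e₁, e₂), ⟨hr₁, hr₂⟩, hC I₁ I₂ e₁ e₂ hc₁ hc₂⟩
  · intro hE I₁ I₂ d₁ d₂ h₁ h₂
    set J₁ := addRel I₁ s (fun _ y => y = d₁)
    set J₂ := addRel I₂ s (fun _ y => y = d₂)
    have hsat₁ : ALC.sat J₁ (ALC.ex s C) d₁ :=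
      ⟨d₁, by simp [J₁, addRel], (sat_addRel I₁ s _ C hs d₁).mpr h₁⟩
    have hsat₂ : ALC.sat J₂ (ALC.ex s C) d₂ :=
      ⟨d₂, by simp [J₂, addRel], (sat_addRel I₂ s _ C hs d₂).mpr h₂⟩
    obtain ⟨e, ⟨he₁, he₂⟩, hce⟩ := hE J₁ J₂ d₁ d₂ hsat₁ hsat₂
    have hfix1 : e.1 = d₁ := by simpa [J₁, addRel] using he₁
    have hfix2 : e.2 = d₂ := by simpa [J₂, addRel] using he₂
    have : ALC.sat (Prod2 I₁ I₂) C e := by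
      have := (sat_rel_congr (I₁.Dom × I₂.Dom) (Prod2 I₁ I₂).atom
        (Prod2 J₁ J₂).rel (Prod2 I₁ I₂).rel C
        (fun r hr => by
          have hne : r ≠ s := fun h => hs (h ▸ hr)
          funext x y
          simp [Prod2, J₁, J₂, addRel, hne]) e).mp hce
      exact this
    have he : e = (d₁, d₂) := Prod.ext hfix1 hfix2
    rwa [he] at this
end

section
/- Unraveling preserves ALC concept satisfaction: for a model I with designated element d̂, define the tree model I' whose domain is the set of paths d₀r₀d₁⋯r_{k-1}d_k with d₀ = d̂ and (d_i, d_{i+1}) ∈ r_i^I, with a path satisfying atom A iff its last element does, and edges extending paths by one step. Then for every ALC concept C and every path p with last element e, we have e ∈ C^I ↔ p ∈ C^{I'}. -/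
/-- `isPath I d l` : the list `l` of (role, element) steps forms a path in `I`
starting at `d`, i.e. consecutive elements are connected by the indicated roles. -/
def isPath {A R : Type} (I : Interp A R) : I.Dom → List (R × I.Dom) → Prop
  | _, [] => True
  | d, (r, e) :: rest => I.rel r d e ∧ isPath I e rest

/-- The last element of the path starting at `d` with steps `l`. -/
def lastOf {A R : Type} (I : Interp A R) : I.Dom → List (R × I.Dom) → I.Dom
  | d, [] => d
  | _, (_, e) :: rest => lastOf I e rest

/-- The unraveling of `I` at `d0`: the tree interpretation whose domain is the
set of paths starting at `d0`, atoms determined by last elements, and edges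
extending a path by one step. -/
def Unravel {A R : Type} (I : Interp A R) (d0 : I.Dom) : Interp A R where
  Dom := { l : List (R × I.Dom) // isPath I d0 l }
  atom a p := I.atom a (lastOf I d0 p.1)
  rel r p q := ∃ e, q.1 = p.1 ++ [(r, e)]

theorem lastOf_append_single {A R : Type} (I : Interp A R) (r : R) (e : I.Dom) :
    ∀ (l : List (R × I.Dom)) (d : I.Dom), lastOf I d (l ++ [(r, e)]) = e := by
  intro l
  induction l with
  | nil => intro d; rfl
  | cons x rest ih => intro d; cases x; simpa [lastOf] using ih _

theorem isPath_append_single {A R : Type} (I : Interp A R) (r : R) (e : I.Dom) :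
    ∀ (l : List (R × I.Dom)) (d : I.Dom),
      isPath I d (l ++ [(r, e)]) ↔ isPath I d l ∧ I.rel r (lastOf I d l) e := by
  intro l
  induction l with
  | nil => intro d; simp [isPath, lastOf]
  | cons x rest ih =>
    intro d; cases x with
    | mk r' e' =>
      simp [isPath, lastOf, ih e', and_assoc]

theorem unraveling_preserves_ALC {A R : Type} (I : Interp A R) (d0 : I.Dom)
    (C : ALC A R) (p : (Unravel I d0).Dom) :
    ALC.sat I C (lastOf I d0 p.1) ↔ ALC.sat (Unravel I d0) C p := by
  induction C generalizing p with
  | atom a => exact Iff.rfl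
  | neg C ih => exact not_congr (ih p)
  | conj C D ihC ihD => exact and_congr (ihC p) (ihD p)
  | ex r C ih =>
    constructor
    · rintro ⟨e, hrel, hsat⟩
      have hpath : isPath I d0 (p.1 ++ [(r, e)]) :=
        (isPath_append_single I r e p.1 d0).mpr ⟨p.2, hrel⟩
      refine ⟨⟨p.1 ++ [(r, e)], hpath⟩, ⟨e, rfl⟩, ?_⟩
      have := (ih ⟨p.1 ++ [(r, e)], hpath⟩).mp
      rw [lastOf_append_single] at this
      exact this hsat
    · rintro ⟨q, ⟨e, hq⟩, hsat⟩
      have hpath := q.2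
      rw [hq] at hpath
      have h := (isPath_append_single I r e p.1 d0).mp hpath
      refine ⟨e, h.2, ?_⟩
      have := (ih q).mpr hsat
      rw [hq, lastOf_append_single] at this
      exact this
end

section
/- Unraveling commutes with products relative to ALC satisfaction: with I₁, I₂ models, d̂₁ ∈ Δ^{I₁}, d̂₂ ∈ Δ^{I₂}, and I'₁, I'₂ their unravelings at d̂₁, d̂₂, for every ALC concept C and all paths p₁ (ending in e₁) and p₂ (ending in e₂), we have (e₁,e₂) ∈ C^{I₁ × I₂} if and only if (p₁,p₂) ∈ C^{I'₁ × I'₂}. -/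
lemma lastOf_append {A R : Type} (I : Interp A R) (d : I.Dom) (l : List (R × I.Dom))
    (r : R) (e : I.Dom) : lastOf I d (l ++ [(r, e)]) = e := by
  induction l generalizing d with
  | nil => rfl
  | cons h t ih => cases h; exact ih _

lemma isPath_append {A R : Type} (I : Interp A R) (d : I.Dom) (l : List (R × I.Dom))
    (r : R) (e : I.Dom) :
    isPath I d (l ++ [(r, e)]) ↔ isPath I d l ∧ I.rel r (lastOf I d l) e := by
  induction l generalizing d with
  | nil => simp [isPath, lastOf]
  | cons h t ih =>
    cases h with
    | mk r' e' =>
      show I.rel r' d e' ∧ isPath I e' (t ++ [(r,e)]) ↔ _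
      rw [ih]; simp [isPath, lastOf, and_assoc]

theorem unraveling_commutes_with_products {A R : Type}
    (I₁ I₂ : Interp A R) (d0₁ : I₁.Dom) (d0₂ : I₂.Dom) (C : ALC A R)
    (p₁ : (Unravel I₁ d0₁).Dom) (p₂ : (Unravel I₂ d0₂).Dom) :
    ALC.sat (Prod2 I₁ I₂) C (lastOf I₁ d0₁ p₁.1, lastOf I₂ d0₂ p₂.1) ↔
    ALC.sat (Prod2 (Unravel I₁ d0₁) (Unravel I₂ d0₂)) C (p₁, p₂) := by
  induction C generalizing p₁ p₂ with
  | atom a => exact Iff.rfl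
  | neg C ih => exact not_congr (ih p₁ p₂)
  | conj C D ihC ihD => exact and_congr (ihC p₁ p₂) (ihD p₁ p₂)
  | ex r C ih =>
    constructor
    · rintro ⟨⟨f₁, f₂⟩, ⟨h₁, h₂⟩, hsat⟩
      refine ⟨(⟨p₁.1 ++ [(r, f₁)], (isPath_append _ _ _ _ _).2 ⟨p₁.2, h₁⟩⟩,
        ⟨p₂.1 ++ [(r, f₂)], (isPath_append _ _ _ _ _).2 ⟨p₂.2, h₂⟩⟩),
        ⟨⟨f₁, rfl⟩, ⟨f₂, rfl⟩⟩, ?_⟩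
      apply (ih _ _).1
      simpa [lastOf_append] using hsat
    · rintro ⟨⟨q₁, q₂⟩, ⟨⟨e₁, he₁⟩, ⟨e₂, he₂⟩⟩, hsat⟩
      have hp₁ := q₁.2; have hp₂ := q₂.2
      rw [he₁, isPath_append] at hp₁
      rw [he₂, isPath_append] at hp₂
      refine ⟨(e₁, e₂), ⟨hp₁.2, hp₂.2⟩, ?_⟩
      have := (ih q₁ q₂).2 hsat
      rwa [he₁, he₂, lastOf_append, lastOf_append] at this
end
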